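/- Let (C, Δ_C, α_C) and (D, Δ_D, α_D) be Hom-coassociative coalgebras. Then C ⊗ D with comultiplication Δ_{C⊗D} = (id_C ⊗ τ_{D,C} ⊗ id_D) ∘ (Δ_C ⊗ Δ_D) and structure map α_C ⊗ α_D is a Hom-coassociative coalgebra. -/
import Mathlib
open TensorProduct

section aux
variable {F : Type*} [Field F] {C D : Type*}
    [AddCommGroup C] [Module F C] [AddCommGroup D] [Module F D]

noncomputable def Pmap (F C D : Type*) [Field F] [AddCommGroup C] [Module F C]
    [AddCommGroup D] [Module F D] :
    (C ⊗[F] (C ⊗[F] C)) ⊗[F] (D ⊗[F] (D ⊗[F] D)) →ₗ[F]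
      (C ⊗[F] D) ⊗[F] ((C ⊗[F] D) ⊗[F] (C ⊗[F] D)) :=
  TensorProduct.map LinearMap.id (TensorProduct.tensorTensorTensorComm F C C D D).toLinearMap ∘ₗ
    (TensorProduct.tensorTensorTensorComm F C (C ⊗[F] C) D (D ⊗[F] D)).toLinearMap

lemma L1 (a : C) (b : D) (u : C ⊗[F] C) (v : D ⊗[F] D) :
    (a ⊗ₜ[F] b) ⊗ₜ[F] (TensorProduct.tensorTensorTensorComm F C C D D (u ⊗ₜ[F] v)) =
      Pmap F C D ((a ⊗ₜ[F] u) ⊗ₜ[F] (b ⊗ₜ[F] v)) := by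
  induction u using TensorProduct.induction_on with
  | zero => simp [Pmap]
  | tmul c3 c4 =>
    induction v using TensorProduct.induction_on with
    | zero => simp [Pmap]
    | tmul d3 d4 => simp [Pmap]
    | add v1 v2 h1 h2 => simp only [tmul_add, map_add, h1, h2]
  | add u1 u2 h1 h2 => simp only [add_tmul, tmul_add, map_add, h1, h2]

lemma L2 (a : C) (b : D) (u : C ⊗[F] C) (v : D ⊗[F] D) :
    (TensorProduct.assoc F (C ⊗[F] D) (C ⊗[F] D) (C ⊗[F] D))
        ((TensorProduct.tensorTensorTensorComm F C C D D (u ⊗ₜ[F] v)) ⊗ₜ[F] (a ⊗ₜ[F] b)) =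
      Pmap F C D ((TensorProduct.assoc F C C C (u ⊗ₜ[F] a)) ⊗ₜ[F]
        (TensorProduct.assoc F D D D (v ⊗ₜ[F] b))) := by
  induction u using TensorProduct.induction_on with
  | zero => simp [Pmap]
  | tmul c3 c4 =>
    induction v using TensorProduct.induction_on with
    | zero => simp [Pmap]
    | tmul d3 d4 => simp [Pmap]
    | add v1 v2 h1 h2 => simp only [tmul_add, add_tmul, map_add, h1, h2]
  | add u1 u2 h1 h2 => simp only [add_tmul, tmul_add, map_add, h1, h2]

lemma L3 (αC : C →ₗ[F] C) (αD : D →ₗ[F] D) (x : C ⊗[F] C) (y : D ⊗[F] D) :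
    TensorProduct.tensorTensorTensorComm F C C D D
        (TensorProduct.map αC αC x ⊗ₜ[F] TensorProduct.map αD αD y) =
      TensorProduct.map (TensorProduct.map αC αD) (TensorProduct.map αC αD)
        (TensorProduct.tensorTensorTensorComm F C C D D (x ⊗ₜ[F] y)) := by
  induction x using TensorProduct.induction_on with
  | zero => simp
  | tmul c1 c2 =>
    induction y using TensorProduct.induction_on with
    | zero => simp
    | tmul d1 d2 => simp
    | add v1 v2 h1 h2 => simp only [tmul_add, map_add, h1, h2]
  | add u1 u2 h1 h2 => simp only [add_tmul, tmul_add, map_add, h1, h2]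

lemma PA (ΔC : C →ₗ[F] C ⊗[F] C) (αC : C →ₗ[F] C)
    (ΔD : D →ₗ[F] D ⊗[F] D) (αD : D →ₗ[F] D) :
    TensorProduct.map (TensorProduct.map αC αD)
        ((TensorProduct.tensorTensorTensorComm F C C D D).toLinearMap ∘ₗ
          TensorProduct.map ΔC ΔD) ∘ₗ
        ((TensorProduct.tensorTensorTensorComm F C C D D).toLinearMap ∘ₗ
          TensorProduct.map ΔC ΔD) =
      Pmap F C D ∘ₗ TensorProduct.map (TensorProduct.map αC ΔC ∘ₗ ΔC)
        (TensorProduct.map αD ΔD ∘ₗ ΔD) := by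
  apply TensorProduct.ext'
  intro c d
  simp only [LinearMap.comp_apply, TensorProduct.map_tmul]
  generalize ΔC c = x
  generalize ΔD d = y
  induction x using TensorProduct.induction_on with
  | zero => simp
  | tmul c1 c2 =>
    induction y using TensorProduct.induction_on with
    | zero => simp
    | tmul d1 d2 =>
      simp only [tensorTensorTensorComm_tmul, TensorProduct.map_tmul,
        LinearMap.coe_comp, LinearEquiv.coe_coe, Function.comp_apply]
      exact L1 (αC c1) (αD d1) (ΔC c2) (ΔD d2)
    | add v1 v2 h1 h2 => simp only [tmul_add, map_add, h1, h2]
  | add u1 u2 h1 h2 => simp only [add_tmul, map_add, h1, h2]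

lemma PB (ΔC : C →ₗ[F] C ⊗[F] C) (αC : C →ₗ[F] C)
    (ΔD : D →ₗ[F] D ⊗[F] D) (αD : D →ₗ[F] D) :
    (TensorProduct.assoc F (C ⊗[F] D) (C ⊗[F] D) (C ⊗[F] D)).toLinearMap ∘ₗ
        TensorProduct.map
          ((TensorProduct.tensorTensorTensorComm F C C D D).toLinearMap ∘ₗ
            TensorProduct.map ΔC ΔD) (TensorProduct.map αC αD) ∘ₗ
        ((TensorProduct.tensorTensorTensorComm F C C D D).toLinearMap ∘ₗ
          TensorProduct.map ΔC ΔD) =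
      Pmap F C D ∘ₗ TensorProduct.map
        ((TensorProduct.assoc F C C C).toLinearMap ∘ₗ TensorProduct.map ΔC αC ∘ₗ ΔC)
        ((TensorProduct.assoc F D D D).toLinearMap ∘ₗ TensorProduct.map ΔD αD ∘ₗ ΔD) := by
  apply TensorProduct.ext'
  intro c d
  simp only [LinearMap.comp_apply, TensorProduct.map_tmul]
  generalize ΔC c = x
  generalize ΔD d = y
  induction x using TensorProduct.induction_on with
  | zero => simp
  | tmul c1 c2 =>
    induction y using TensorProduct.induction_on with
    | zero => simp
    | tmul d1 d2 =>
      simp only [tensorTensorTensorComm_tmul, TensorProduct.map_tmul,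
        LinearMap.coe_comp, LinearEquiv.coe_coe, Function.comp_apply]
      exact L2 (αC c2) (αD d2) (ΔC c1) (ΔD d1)
    | add v1 v2 h1 h2 => simp only [tmul_add, map_add, h1, h2]
  | add u1 u2 h1 h2 => simp only [add_tmul, map_add, h1, h2]

end aux

/-- The tensor product of two Hom-coassociative coalgebras is a
Hom-coassociative coalgebra. -/
theorem stmt_9 {F : Type*} [Field F] {C D : Type*}
    [AddCommGroup C] [Module F C] [AddCommGroup D] [Module F D]
    (ΔC : C →ₗ[F] C ⊗[F] C) (αC : C →ₗ[F] C)
    (ΔD : D →ₗ[F] D ⊗[F] D) (αD : D →ₗ[F] D)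
    (hCcm : ΔC ∘ₗ αC = TensorProduct.map αC αC ∘ₗ ΔC)
    (hCca : TensorProduct.map αC ΔC ∘ₗ ΔC =
      (TensorProduct.assoc F C C C).toLinearMap ∘ₗ TensorProduct.map ΔC αC ∘ₗ ΔC)
    (hDcm : ΔD ∘ₗ αD = TensorProduct.map αD αD ∘ₗ ΔD)
    (hDca : TensorProduct.map αD ΔD ∘ₗ ΔD =
      (TensorProduct.assoc F D D D).toLinearMap ∘ₗ TensorProduct.map ΔD αD ∘ₗ ΔD) :
    -- comultiplicativity of Δ_{C⊗D} = (id ⊗ τ ⊗ id) ∘ (Δ_C ⊗ Δ_D)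
    ((TensorProduct.tensorTensorTensorComm F C C D D).toLinearMap ∘ₗ
        TensorProduct.map ΔC ΔD) ∘ₗ TensorProduct.map αC αD =
      TensorProduct.map (TensorProduct.map αC αD) (TensorProduct.map αC αD) ∘ₗ
        ((TensorProduct.tensorTensorTensorComm F C C D D).toLinearMap ∘ₗ
          TensorProduct.map ΔC ΔD) ∧
    -- Hom-coassociativity of Δ_{C⊗D}
    TensorProduct.map (TensorProduct.map αC αD)
        ((TensorProduct.tensorTensorTensorComm F C C D D).toLinearMap ∘ₗ
          TensorProduct.map ΔC ΔD) ∘ₗ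
        ((TensorProduct.tensorTensorTensorComm F C C D D).toLinearMap ∘ₗ
          TensorProduct.map ΔC ΔD) =
      (TensorProduct.assoc F (C ⊗[F] D) (C ⊗[F] D) (C ⊗[F] D)).toLinearMap ∘ₗ
        TensorProduct.map
          ((TensorProduct.tensorTensorTensorComm F C C D D).toLinearMap ∘ₗ
            TensorProduct.map ΔC ΔD) (TensorProduct.map αC αD) ∘ₗ
        ((TensorProduct.tensorTensorTensorComm F C C D D).toLinearMap ∘ₗ
          TensorProduct.map ΔC ΔD) := by
  constructor
  · apply TensorProduct.ext'
    intro c d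
    have h1 := LinearMap.congr_fun hCcm c
    have h2 := LinearMap.congr_fun hDcm d
    simp only [LinearMap.comp_apply, TensorProduct.map_tmul] at *
    rw [h1, h2]
    exact L3 αC αD (ΔC c) (ΔD d)
  · rw [PA, PB, hCca, hDca]
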